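/- Let 𝒜 be a unital C*-algebra and τ a tracial state (τ(ab) = τ(ba) for all a, b). Then the orbit of τ under the action Φ_g(τ)(a) = τ(g† a g)/τ(g† g) is a convex subset of the state space: for any invertible g₁, g₂ and λ ∈ [0,1], the state λ Φ_{g₁}(τ) + (1−λ) Φ_{g₂}(τ) equals Φ_p(τ) for some invertible element p of 𝒜. -/

import Mathlib

open scoped ComplexOrder

lemma isUnit_of_isUnit_mul_self {A : Type*} [Monoid A] {s : A} (h : IsUnit (s * s)) :
    IsUnit s := by
  obtain ⟨u, hu⟩ := h
  have h1 : s * (s * ↑u⁻¹) = 1 := by rw [← mul_assoc, ← hu, Units.mul_inv]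
  have h2 : (↑u⁻¹ : A) * (s * s) = 1 := by rw [← hu, Units.inv_mul]
  have h3 : (↑u⁻¹ : A) * s = s * ↑u⁻¹ := by
    calc (↑u⁻¹ : A) * s = (↑u⁻¹ * s) * (s * (s * ↑u⁻¹)) := by rw [h1, mul_one]
    _ = (↑u⁻¹ * (s * s)) * (s * ↑u⁻¹) := by simp only [mul_assoc]
    _ = s * ↑u⁻¹ := by rw [h2, one_mul]
  exact ⟨⟨s, s * ↑u⁻¹, h1, by rw [← h3, mul_assoc, h2]⟩, rfl⟩

/-- If `τ` is a tracial state on a unital C*-algebra, the orbit of `τ` under the action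
`Φ_g(τ)(a) = τ(g† a g)/τ(g† g)` is convex: any convex combination of two points of the orbit is
again of the form `Φ_p(τ)` for some invertible `p`. -/
theorem stmt9 {A : Type*} [NormedRing A] [StarRing A] [CStarRing A] [NormedAlgebra ℂ A]
    [CompleteSpace A] [StarModule ℂ A] (τ : A →L[ℂ] ℂ)
    (hpos : ∀ a : A, 0 ≤ τ (star a * a)) (h1 : τ 1 = 1)
    (htr : ∀ a b : A, τ (a * b) = τ (b * a))
    (g₁ g₂ : Aˣ) (l : ℝ) (hl0 : 0 ≤ l) (hl1 : l ≤ 1) :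
    ∃ p : Aˣ, ∀ a : A,
      (l : ℂ) * (τ (star (g₁ : A) * a * (g₁ : A)) / τ (star (g₁ : A) * (g₁ : A))) +
          (1 - (l : ℂ)) * (τ (star (g₂ : A) * a * (g₂ : A)) / τ (star (g₂ : A) * (g₂ : A))) =
        τ (star (p : A) * a * (p : A)) / τ (star (p : A) * (p : A)) := by
  letI : CStarAlgebra A := { ‹NormedRing A›, ‹StarRing A›, ‹CStarRing A›,
    ‹NormedAlgebra ℂ A›, ‹StarModule ℂ A›, ‹CompleteSpace A› with }
  letI : PartialOrder A := CStarAlgebra.spectralOrder A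
  haveI : StarOrderedRing A := CStarAlgebra.spectralOrderedRing A
  haveI : Nontrivial A := by
    refine ⟨1, 0, fun h => ?_⟩
    have : (1 : ℂ) = 0 := by rw [← h1, h, map_zero]
    exact one_ne_zero this
  -- τ is nonnegative on nonnegative elements
  have tau_nonneg : ∀ x : A, 0 ≤ x → 0 ≤ τ x := by
    intro x hx
    have h := hpos (CFC.sqrt x)
    rwa [(IsSelfAdjoint.of_nonneg (CFC.sqrt_nonneg x)).star_eq,
      CFC.sqrt_mul_sqrt_self x hx] at h
  -- key : τ (star g * g) is a positive real for g a unit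
  have key : ∀ g : Aˣ, ∃ r : ℝ, 0 < r ∧ τ (star (g : A) * g) = (r : ℂ) := by
    intro g
    have hn : (0 : A) ≤ star (g : A) * g := star_mul_self_nonneg _
    have hu : IsUnit (star (g : A) * (g : A)) := g.isUnit.star.mul g.isUnit
    obtain ⟨r, hr, hle⟩ : ∃ r > 0, algebraMap ℝ A r ≤ star (g : A) * g := by
      rw [CFC.exists_pos_algebraMap_le_iff]
      intro x hx
      have h0 : 0 ≤ x := spectrum_nonneg_of_nonneg hn hx
      have hne : x ≠ 0 := fun h => (spectrum.zero_notMem_iff ℝ).mpr hu (h ▸ hx)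
      exact h0.lt_of_ne' hne
    have htau_r : τ (algebraMap ℝ A r) = (r : ℂ) := by
      rw [IsScalarTower.algebraMap_apply ℝ ℂ A r, Algebra.algebraMap_eq_smul_one,
        map_smul, h1, smul_eq_mul, mul_one]
      rfl
    have hle' : (r : ℂ) ≤ τ (star (g : A) * g) := by
      have h := tau_nonneg _ (sub_nonneg.mpr hle)
      rw [map_sub, htau_r] at h
      exact sub_nonneg.mp h
    set c := τ (star (g : A) * g) with hc
    have him : c.im = 0 := by
      have := (Complex.le_def.mp hle').2
      simpa using this.symm
    have hre : r ≤ c.re := by simpa using (Complex.le_def.mp hle').1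
    exact ⟨c.re, hr.trans_le hre, by
      apply Complex.ext <;> simp [him]⟩
  obtain ⟨r₁, hr₁, hc₁⟩ := key g₁
  obtain ⟨r₂, hr₂, hc₂⟩ := key g₂
  -- the positive element x
  set a₁ : ℝ := l / r₁ with ha₁
  set a₂ : ℝ := (1 - l) / r₂ with ha₂
  have ha₁0 : 0 ≤ a₁ := div_nonneg hl0 hr₁.le
  have ha₂0 : 0 ≤ a₂ := div_nonneg (by linarith) hr₂.le
  set t₁ : A := (a₁ : ℂ) • ((g₁ : A) * star (g₁ : A)) with ht₁
  set t₂ : A := (a₂ : ℂ) • ((g₂ : A) * star (g₂ : A)) with ht₂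
  have hterm_eq : ∀ (b : ℝ) (g : Aˣ), 0 ≤ b → (b : ℂ) • ((g : A) * star (g : A)) =
      star ((Real.sqrt b : ℂ) • star (g : A)) * ((Real.sqrt b : ℂ) • star (g : A)) := by
    intro b g hb
    rw [star_smul, star_star, smul_mul_smul_comm]
    congr 1
    rw [Complex.star_def, Complex.conj_ofReal, ← Complex.ofReal_mul,
      Real.mul_self_sqrt hb]
  have ht₁0 : (0 : A) ≤ t₁ := ht₁ ▸ hterm_eq a₁ g₁ ha₁0 ▸ star_mul_self_nonneg _
  have ht₂0 : (0 : A) ≤ t₂ := ht₂ ▸ hterm_eq a₂ g₂ ha₂0 ▸ star_mul_self_nonneg _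
  have hterm_unit : ∀ (b : ℝ) (g : Aˣ), 0 < b →
      IsUnit ((b : ℂ) • ((g : A) * star (g : A))) := by
    intro b g hb
    rw [Algebra.smul_def]
    exact ((isUnit_iff_ne_zero.mpr (by exact_mod_cast hb.ne')).map
      (algebraMap ℂ A)).mul (g.isUnit.mul g.isUnit.star)
  set x : A := t₁ + t₂ with hx
  have hx0 : (0 : A) ≤ x := add_nonneg ht₁0 ht₂0
  have hxu : IsUnit x := by
    by_cases hl : 0 < l
    · exact CStarAlgebra.isUnit_of_le t₁ (le_add_of_nonneg_right ht₂0)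
        ((hterm_unit a₁ g₁ (div_pos hl hr₁)).isStrictlyPositive ht₁0)
    · have hl' : 0 < 1 - l := by
        rcases hl0.lt_or_eq with h | h
        · exact absurd h hl
        · simp [← h]
      exact CStarAlgebra.isUnit_of_le t₂ (le_add_of_nonneg_left ht₁0)
        ((hterm_unit a₂ g₂ (div_pos hl' hr₂)).isStrictlyPositive ht₂0)
  -- the square root
  set s : A := CFC.sqrt x with hs
  have hs0 : (0 : A) ≤ s := CFC.sqrt_nonneg (a := x)
  have hss : s * s = x := CFC.sqrt_mul_sqrt_self x hx0
  have hsu : IsUnit s := isUnit_of_isUnit_mul_self (hss ▸ hxu)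
  obtain ⟨p, hp⟩ := hsu
  refine ⟨p, fun a => ?_⟩
  have hstar : star (p : A) = s := by rw [hp, (IsSelfAdjoint.of_nonneg hs0).star_eq]
  -- τ (star p * a * p) = τ (x * a)
  have hτxa : τ (star (p : A) * a * (p : A)) = τ (x * a) := by
    rw [hstar, hp, htr, ← mul_assoc, hss]
  -- τ (star p * p) = 1
  have hgg : ∀ g : Aˣ, τ ((g : A) * star (g : A)) = τ (star (g : A) * g) := fun g =>
    htr _ _
  have hτx : τ x = 1 := by
    rw [hx, ht₁, ht₂, map_add, map_smul, map_smul, smul_eq_mul, smul_eq_mul,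
      hgg g₁, hgg g₂, hc₁, hc₂, ha₁, ha₂]
    push_cast
    field_simp
    ring
  have hτp : τ (star (p : A) * (p : A)) = 1 := by
    rw [hstar, hp, hss, hτx]
  rw [hτxa, hτp, div_one]
  -- expand τ (x * a)
  have hswap : ∀ g : Aˣ, τ ((g : A) * star (g : A) * a) = τ (star (g : A) * a * (g : A)) := by
    intro g
    rw [mul_assoc, htr, mul_assoc]
  rw [hx, ht₁, ht₂, add_mul, smul_mul_assoc, smul_mul_assoc, map_add, map_smul,
    map_smul, smul_eq_mul, smul_eq_mul, hswap g₁, hswap g₂, hc₁, hc₂, ha₁, ha₂]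
  push_cast
  have hr₁' : (r₁ : ℂ) ≠ 0 := by exact_mod_cast hr₁.ne'
  have hr₂' : (r₂ : ℂ) ≠ 0 := by exact_mod_cast hr₂.ne'
  field_simp
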